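/- Fix r₀ > 0 and let μ be defined by cosh(μ(t)) = cosh²(r₀) − sinh²(r₀)·cos(min{π, t/sinh r₀}). Then for every t ∈ [0, π sinh r₀], one has t ≤ π · sinh(μ(t)/2). -/

import Mathlib

open Real

/-- For the comparison function μ of the hyperbolic cone of radius r₀,
for every t ∈ [0, π sinh r₀] one has t ≤ π sinh(μ(t)/2). -/
theorem cone_comparison_function_lower_bound
    (r₀ : ℝ) (hr₀ : 0 < r₀) (μ : ℝ → ℝ)
    (hμ_nonneg : ∀ t : ℝ, 0 ≤ t → 0 ≤ μ t)
    (hμ : ∀ t : ℝ, 0 ≤ t →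
      Real.cosh (μ t) =
        Real.cosh r₀ ^ 2 -
          Real.sinh r₀ ^ 2 * Real.cos (min π (t / Real.sinh r₀))) :
    ∀ t : ℝ, t ∈ Set.Icc 0 (π * Real.sinh r₀) →
      t ≤ π * Real.sinh (μ t / 2) := by
  rintro t ⟨ht0, ht1⟩
  have hs : 0 < Real.sinh r₀ := Real.sinh_pos_iff.2 hr₀
  set θ := t / Real.sinh r₀ with hθ
  have hθ0 : 0 ≤ θ := div_nonneg ht0 hs.le
  have hθπ : θ ≤ π := (div_le_iff₀ hs).2 (by linarith [ht1])
  have hmin : min π θ = θ := min_eq_right hθπ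
  have hcosh := hμ t ht0
  rw [hmin] at hcosh
  -- sinh(μ t / 2)^2 = sinh r₀ ^ 2 * sin(θ/2)^2
  have hdouble : Real.cosh (μ t) = 1 + 2 * Real.sinh (μ t / 2) ^ 2 := by
    have := Real.cosh_two_mul (μ t / 2)
    rw [show 2 * (μ t / 2) = μ t by ring] at this
    rw [this, Real.cosh_sq]; ring
  have hsinsq : Real.sin (θ / 2) ^ 2 = (1 - Real.cos θ) / 2 := by
    have hc := Real.cos_two_mul (θ / 2)
    rw [show 2 * (θ / 2) = θ by ring] at hc
    have hsc := Real.sin_sq_add_cos_sq (θ / 2)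
    nlinarith [hc, hsc]
  have hsq : Real.sinh (μ t / 2) ^ 2 = (Real.sinh r₀ * Real.sin (θ / 2)) ^ 2 := by
    have h1 : Real.cosh r₀ ^ 2 = 1 + Real.sinh r₀ ^ 2 := Real.cosh_sq' r₀
    nlinarith [hcosh, hdouble, hsinsq]
  have hsin_nonneg : 0 ≤ Real.sin (θ / 2) :=
    Real.sin_nonneg_of_nonneg_of_le_pi (by linarith) (by linarith [Real.pi_pos])
  have hsinh_nonneg : 0 ≤ Real.sinh (μ t / 2) :=
    Real.sinh_nonneg_iff.2 (by linarith [hμ_nonneg t ht0])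
  have heq : Real.sinh (μ t / 2) = Real.sinh r₀ * Real.sin (θ / 2) := by
    have h2 : 0 ≤ Real.sinh r₀ * Real.sin (θ / 2) := mul_nonneg hs.le hsin_nonneg
    nlinarith [hsq]
  rw [heq]
  -- Jordan inequality: θ / π ≤ sin (θ / 2)
  have hj : 2 / π * (θ / 2) ≤ Real.sin (θ / 2) :=
    Real.mul_le_sin (by linarith) (by linarith)
  have hπ : 0 < π := Real.pi_pos
  have hθsin : θ ≤ π * Real.sin (θ / 2) := by
    have := mul_le_mul_of_nonneg_left hj hπ.le
    calc θ = π * (2 / π * (θ / 2)) := by field_simp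
    _ ≤ π * Real.sin (θ / 2) := this
  have : θ * Real.sinh r₀ ≤ π * (Real.sinh r₀ * Real.sin (θ / 2)) := by
    nlinarith [mul_le_mul_of_nonneg_right hθsin hs.le]
  have ht : t = θ * Real.sinh r₀ := by
    rw [hθ, div_mul_cancel₀ t hs.ne']
  linarith [this, ht ▸ this]
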